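/- Let α ∈ [0, π/2], let Z and ζ be independent standard Gaussian random variables, let f : ℝ → ℝ be differentiable with |f'(x)| ≤ C + |x|^{α₁} for some C > 0 and α₁ ∈ (0,1], and set Z* = cos α·Z + sin α·ζ, g(z) = E[f(cos α·z + sin α·ζ)]. Then E[(f(Z*) - g(Z))²·1_{|Z| ≤ R}] ≤ C'·sin²α for a constant C' depending only on C and R (polynomially). -/

import Mathlib

open MeasureTheory ProbabilityTheory Real

namespace MisspecAux

/-- `|x|^a ≤ 1 + |x|` for `0 < a ≤ 1`. -/
lemma rpow_abs_le {x a : ℝ} (ha : 0 < a) (ha1 : a ≤ 1) : |x| ^ a ≤ 1 + |x| := by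
  rcases le_total (|x|) 1 with h | h
  · have := Real.rpow_le_one (abs_nonneg x) h ha.le
    linarith [abs_nonneg x]
  · have h1 : |x| ^ a ≤ |x| ^ (1 : ℝ) := Real.rpow_le_rpow_of_exponent_le h ha1
    rw [Real.rpow_one] at h1
    linarith

/-- Mean value bound. -/
lemma lip {C α₁ : ℝ} (hα : 0 < α₁) (hα1 : α₁ ≤ 1) {f : ℝ → ℝ}
    (hf : Differentiable ℝ f) (hf' : ∀ x, |deriv f x| ≤ C + |x| ^ α₁) (u v : ℝ) :
    |f u - f v| ≤ (C + 1 + |u| + |v|) * |u - v| := by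
  have bound : ∀ x ∈ Set.uIcc v u, ‖deriv f x‖ ≤ C + 1 + |u| + |v| := by
    intro x hx
    rw [Set.mem_uIcc] at hx
    have hxb : |x| ≤ |u| + |v| := by
      rcases hx with ⟨h1, h2⟩ | ⟨h1, h2⟩
      · have := abs_le_max_abs_abs h1 h2
        calc |x| ≤ max |v| |u| := this
          _ ≤ |u| + |v| := max_le (by linarith [abs_nonneg u]) (by linarith [abs_nonneg v])
      · have := abs_le_max_abs_abs h1 h2
        calc |x| ≤ max |u| |v| := this
          _ ≤ |u| + |v| := max_le (by linarith [abs_nonneg v]) (by linarith [abs_nonneg u])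
    have h2 : |x| ^ α₁ ≤ 1 + |x| := rpow_abs_le hα hα1
    have := hf' x
    simp only [Real.norm_eq_abs]
    linarith
  have := Convex.norm_image_sub_le_of_norm_deriv_le
    (fun x _ => hf.differentiableAt) bound (convex_uIcc v u)
    (Set.left_mem_uIcc) (Set.right_mem_uIcc)
  simpa [Real.norm_eq_abs] using this

/-- linear-quadratic growth of `f`. -/
lemma f_growth {C α₁ : ℝ} (hα : 0 < α₁) (hα1 : α₁ ≤ 1) {f : ℝ → ℝ}
    (hf : Differentiable ℝ f) (hf' : ∀ x, |deriv f x| ≤ C + |x| ^ α₁) (u : ℝ) :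
    |f u| ≤ |f 0| + (C + 1 + |u|) * |u| := by
  have h := lip hα hα1 hf hf' u 0
  simp only [abs_zero, add_zero, sub_zero] at h
  calc |f u| = |f u - f 0 + f 0| := by ring_nf
    _ ≤ |f u - f 0| + |f 0| := abs_add_le _ _
    _ ≤ (C + 1 + |u|) * |u| + |f 0| := by linarith
    _ = |f 0| + (C + 1 + |u|) * |u| := by ring

/-- The key integrable dominating function for the standard gaussian. -/
lemma integrable_dom : Integrable (fun x : ℝ => (1 + x ^ 2) ^ 2) (gaussianReal 0 1) := by
  rw [gaussianReal_of_var_ne_zero _ one_ne_zero,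
    integrable_withDensity_iff (measurable_gaussianPDF _ _)
      (ae_of_all _ fun x => ENNReal.ofReal_lt_top)]
  have hpdf : ∀ x : ℝ, (gaussianPDF 0 1 x).toReal
      = (Real.sqrt (2 * π))⁻¹ * Real.exp (-(x ^ 2 / 2)) := by
    intro x
    rw [gaussianPDF, ENNReal.toReal_ofReal (gaussianPDFReal_nonneg _ _ _), gaussianPDFReal]
    norm_num [neg_div]
  refine Integrable.mono'
    ((integrable_exp_neg_mul_sq (show (0:ℝ) < 1/4 by norm_num)).const_mul
      (73 * (Real.sqrt (2 * π))⁻¹)) ?_ (ae_of_all _ fun x => ?_)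
  · exact (((measurable_const.add (measurable_id.pow_const 2)).pow_const 2).mul
      (measurable_gaussianPDF 0 1).ennreal_toReal).aestronglyMeasurable
  · rw [hpdf x, Real.norm_eq_abs, abs_of_nonneg (by positivity)]
    have he : ∀ t : ℝ, t ≤ Real.exp t := fun t =>
      le_trans (by linarith) (Real.add_one_le_exp t)
    have h8 := he (x ^ 2 / 8)
    have hsq : Real.exp (x ^ 2 / 8) * Real.exp (x ^ 2 / 8) = Real.exp (x ^ 2 / 4) := by
      rw [← Real.exp_add]; congr 1; ring
    have hself := mul_self_le_mul_self (by positivity : (0:ℝ) ≤ x ^ 2 / 8) h8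
    rw [hsq] at hself
    have hx2 := he (x ^ 2 / 4)
    have h1 : (1:ℝ) ≤ Real.exp (x ^ 2 / 4) := Real.one_le_exp (by positivity)
    have hpoly : (1 + x ^ 2) ^ 2 ≤ 73 * Real.exp (x ^ 2 / 4) := by nlinarith
    have hmul : Real.exp (x ^ 2 / 4) * Real.exp (-(x ^ 2 / 2)) = Real.exp (-(1/4) * x ^ 2) := by
      rw [← Real.exp_add]; congr 1; ring
    calc (1 + x ^ 2) ^ 2 * ((Real.sqrt (2 * π))⁻¹ * Real.exp (-(x ^ 2 / 2)))
        = ((1 + x ^ 2) ^ 2 * Real.exp (-(x ^ 2 / 2))) * (Real.sqrt (2 * π))⁻¹ := by ring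
      _ ≤ (73 * Real.exp (-(1/4) * x ^ 2)) * (Real.sqrt (2 * π))⁻¹ := by
          refine mul_le_mul_of_nonneg_right ?_ (by positivity)
          calc (1 + x ^ 2) ^ 2 * Real.exp (-(x ^ 2 / 2))
              ≤ 73 * Real.exp (x ^ 2 / 4) * Real.exp (-(x ^ 2 / 2)) :=
                mul_le_mul_of_nonneg_right hpoly (Real.exp_pos _).le
            _ = 73 * Real.exp (-(1/4) * x ^ 2) := by rw [mul_assoc, hmul]
      _ = 73 * (Real.sqrt (2 * π))⁻¹ * Real.exp (-(1/4) * x ^ 2) := by ring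

/-- Integrability from a `(1+x^2)^2` domination. -/
lemma integrable_of_dom {g : ℝ → ℝ} (hm : AEStronglyMeasurable g (gaussianReal 0 1))
    (M : ℝ) (h : ∀ x, |g x| ≤ M * (1 + x ^ 2) ^ 2) : Integrable g (gaussianReal 0 1) :=
  (integrable_dom.const_mul M).mono' hm
    (ae_of_all _ fun x => by rw [Real.norm_eq_abs]; exact h x)

end MisspecAux

open MisspecAux

set_option maxHeartbeats 1000000 in
theorem misspecified_approximation_error (C R : ℝ) (hC : 0 < C) (hR : 0 < R) :
    ∃ C' : ℝ, 0 ≤ C' ∧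
      ∀ α₁ : ℝ, 0 < α₁ → α₁ ≤ 1 →
      ∀ f : ℝ → ℝ, Differentiable ℝ f → (∀ x, |deriv f x| ≤ C + |x| ^ α₁) →
      ∀ a : ℝ, a ∈ Set.Icc 0 (Real.pi / 2) →
        (∫ p : ℝ × ℝ,
            (if |p.1| ≤ R then
              (f (Real.cos a * p.1 + Real.sin a * p.2) -
                ∫ ζ, f (Real.cos a * p.1 + Real.sin a * ζ) ∂(gaussianReal 0 1)) ^ 2
            else 0)
          ∂((gaussianReal 0 1).prod (gaussianReal 0 1))) ≤ C' * (Real.sin a) ^ 2 := by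
  classical
  have habs_int : Integrable (fun x : ℝ => |x|) (gaussianReal 0 1) :=
    integrable_of_dom continuous_abs.aestronglyMeasurable 1 (fun x => by
      rw [abs_abs]
      nlinarith [sq_nonneg (|x| - 1), sq_abs x, sq_nonneg x, abs_nonneg x])
  have hsq_int : Integrable (fun x : ℝ => x ^ 2) (gaussianReal 0 1) :=
    integrable_of_dom (continuous_pow 2).aestronglyMeasurable 1 (fun x => by
      rw [abs_of_nonneg (sq_nonneg x)]
      nlinarith [sq_nonneg x, sq_nonneg (x ^ 2)])
  have habs_sq_int : Integrable (fun x : ℝ => |x| ^ 2) (gaussianReal 0 1) := by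
    simpa [sq_abs] using hsq_int
  set m1 := ∫ x, |x| ∂(gaussianReal 0 1) with hm1def
  set m2 := ∫ x, x ^ 2 ∂(gaussianReal 0 1) with hm2def
  have hm1 : 0 ≤ m1 := integral_nonneg fun x => abs_nonneg x
  have hm2 : 0 ≤ m2 := integral_nonneg fun x => sq_nonneg x
  set K := C + 1 + 2 * R with hKdef
  have hK : 0 ≤ K := by simp only [hKdef]; linarith
  set Q : ℝ → ℝ := fun A => (K + A) * A + (K + 2 * A) * m1 + m2 with hQdef
  have hQc : Continuous fun x : ℝ => (Q |x|) ^ 2 := by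
    apply Continuous.pow
    exact (((continuous_const.add continuous_abs).mul continuous_abs).add
      ((continuous_const.add (continuous_const.mul continuous_abs)).mul continuous_const)).add
      continuous_const
  have hQ0 : ∀ A : ℝ, 0 ≤ A → 0 ≤ Q A := by
    intro A hA
    have h1 : 0 ≤ (K + A) * A := mul_nonneg (by linarith) hA
    have h2 : 0 ≤ (K + 2 * A) * m1 := mul_nonneg (by linarith) hm1
    simp only [hQdef]; linarith
  set c1 := K + 1 + K * m1 + 2 * m1 + m2 with hc1def
  have hQle : ∀ x : ℝ, Q |x| ≤ c1 * (1 + x ^ 2) := by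
    intro x
    have hA : |x| ≤ 1 + x ^ 2 := by nlinarith [sq_nonneg (|x| - 1), sq_abs x]
    have hA2 : |x| ^ 2 = x ^ 2 := sq_abs x
    simp only [hQdef, hc1def]
    nlinarith [mul_le_mul_of_nonneg_left hA hK,
      mul_le_mul_of_nonneg_left hA (by linarith : (0:ℝ) ≤ 2 * m1),
      mul_nonneg (mul_nonneg hK hm1) (sq_nonneg x), mul_nonneg hm2 (sq_nonneg x),
      sq_nonneg x]
  have hQsq : ∀ x : ℝ, (Q |x|) ^ 2 ≤ c1 ^ 2 * (1 + x ^ 2) ^ 2 := by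
    intro x
    have h0 := hQ0 |x| (abs_nonneg x)
    have h1 := hQle x
    nlinarith [sq_nonneg (1 + x ^ 2)]
  have hC'int : Integrable (fun x : ℝ => (Q |x|) ^ 2) (gaussianReal 0 1) :=
    integrable_of_dom hQc.aestronglyMeasurable (c1 ^ 2) (fun x => by
      rw [abs_of_nonneg (sq_nonneg _)]; exact hQsq x)
  refine ⟨∫ x, (Q |x|) ^ 2 ∂(gaussianReal 0 1), integral_nonneg (fun x => sq_nonneg _), ?_⟩
  intro α₁ hα hα1 f hf hf' a ha
  obtain ⟨ha0, haπ⟩ := ha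
  have hs0 : 0 ≤ Real.sin a :=
    Real.sin_nonneg_of_nonneg_of_le_pi ha0 (haπ.trans (by linarith [Real.pi_pos]))
  have hs1 : Real.sin a ≤ 1 := Real.sin_le_one a
  have hcos : |Real.cos a| ≤ 1 := Real.abs_cos_le_one a
  have key : ∀ p : ℝ × ℝ,
      (if |p.1| ≤ R then
        (f (Real.cos a * p.1 + Real.sin a * p.2) -
          ∫ ζ, f (Real.cos a * p.1 + Real.sin a * ζ) ∂(gaussianReal 0 1)) ^ 2
      else 0) ≤ Real.sin a ^ 2 * (Q |p.2|) ^ 2 := by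
    intro p
    split_ifs with hz
    swap
    · exact mul_nonneg (sq_nonneg _) (sq_nonneg _)
    set b := Real.cos a * p.1 with hbdef
    have hb : |b| ≤ R := by
      rw [hbdef, abs_mul]
      calc |Real.cos a| * |p.1| ≤ 1 * R :=
            mul_le_mul hcos hz (abs_nonneg _) zero_le_one
        _ = R := one_mul R
    have hbound : ∀ t : ℝ, |b + Real.sin a * t| ≤ R + |t| := by
      intro t
      have h1 : |b + Real.sin a * t| ≤ |b| + |Real.sin a * t| := abs_add_le _ _
      have h2 : |Real.sin a * t| ≤ |t| := by
        rw [abs_mul, abs_of_nonneg hs0]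
        nlinarith [abs_nonneg t]
      linarith
    have hfi : Integrable (fun t => f (b + Real.sin a * t)) (gaussianReal 0 1) := by
      refine integrable_of_dom
        ((hf.continuous.comp (continuous_const.add (continuous_const.mul continuous_id))).aestronglyMeasurable)
        (|f 0| + 2 * (C + 1 + R) ^ 2 + 2) (fun t => ?_)
      have h1 := f_growth hα hα1 hf hf' (b + Real.sin a * t)
      have h2 := hbound t
      have h3 : (C + 1 + |b + Real.sin a * t|) * |b + Real.sin a * t|
          ≤ (C + 1 + R + |t|) * (R + |t|) := by
        apply mul_le_mul (by linarith) h2 (abs_nonneg _)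
        have := abs_nonneg t; linarith
      have h4 : (C + 1 + R + |t|) * (R + |t|) ≤ 2 * (C + 1 + R) ^ 2 + 2 * t ^ 2 := by
        nlinarith [sq_nonneg (C + 1 + R - |t|), sq_abs t, abs_nonneg t]
      calc |f (b + Real.sin a * t)| ≤ |f 0| + (C + 1 + |b + Real.sin a * t|) * |b + Real.sin a * t| := h1
        _ ≤ |f 0| + 2 * (C + 1 + R) ^ 2 + 2 * t ^ 2 := by linarith
        _ ≤ (|f 0| + 2 * (C + 1 + R) ^ 2 + 2) * (1 + t ^ 2) ^ 2 := by
            nlinarith [abs_nonneg (f 0), sq_nonneg t, sq_nonneg (t ^ 2), sq_nonneg (C + 1 + R),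
              mul_nonneg (abs_nonneg (f 0)) (sq_nonneg t),
              mul_nonneg (mul_nonneg (abs_nonneg (f 0)) (sq_nonneg t)) (sq_nonneg t),
              mul_nonneg (sq_nonneg (C + 1 + R)) (sq_nonneg t),
              mul_nonneg (mul_nonneg (sq_nonneg (C + 1 + R)) (sq_nonneg t)) (sq_nonneg t)]
    have hnnKA : (0:ℝ) ≤ K + |p.2| := by have := abs_nonneg p.2; linarith
    have hDi : Integrable (fun t : ℝ => Real.sin a * ((K + |p.2| + |t|) * (|p.2| + |t|)))
        (gaussianReal 0 1) := by
      refine integrable_of_dom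
        ((continuous_const.mul (((continuous_const.add continuous_abs).mul
          (continuous_const.add continuous_abs)))).aestronglyMeasurable)
        (2 * (K + |p.2|) ^ 2 + 2) (fun t => ?_)
      have h0 : 0 ≤ (K + |p.2| + |t|) * (|p.2| + |t|) :=
        mul_nonneg (by have := abs_nonneg t; linarith) (by positivity)
      rw [abs_mul, abs_of_nonneg hs0, abs_of_nonneg h0]
      have h1 : Real.sin a * ((K + |p.2| + |t|) * (|p.2| + |t|))
          ≤ (K + |p.2| + |t|) * (|p.2| + |t|) := by nlinarith
      have h2 : (K + |p.2| + |t|) * (|p.2| + |t|) ≤ 2 * (K + |p.2|) ^ 2 + 2 * t ^ 2 := by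
        nlinarith [sq_nonneg (K + |p.2| - |t|), sq_abs t, abs_nonneg t, abs_nonneg p.2]
      have h3 : 2 * (K + |p.2|) ^ 2 + 2 * t ^ 2 ≤ (2 * (K + |p.2|) ^ 2 + 2) * (1 + t ^ 2) ^ 2 := by
        nlinarith [sq_nonneg t, sq_nonneg (t ^ 2), sq_nonneg (K + |p.2|),
          mul_nonneg (sq_nonneg (K + |p.2|)) (sq_nonneg t),
          mul_nonneg (mul_nonneg (sq_nonneg (K + |p.2|)) (sq_nonneg t)) (sq_nonneg t)]
      linarith
    have hsub : f (b + Real.sin a * p.2) -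
        (∫ ζ, f (b + Real.sin a * ζ) ∂(gaussianReal 0 1))
        = ∫ t, (f (b + Real.sin a * p.2) - f (b + Real.sin a * t)) ∂(gaussianReal 0 1) := by
      rw [integral_sub (integrable_const _) hfi, integral_const]
      simp
    have habs2 : |f (b + Real.sin a * p.2) -
        ∫ ζ, f (b + Real.sin a * ζ) ∂(gaussianReal 0 1)| ≤ Real.sin a * Q |p.2| := by
      rw [hsub]
      have step1 : |∫ t, (f (b + Real.sin a * p.2) - f (b + Real.sin a * t)) ∂(gaussianReal 0 1)|
          ≤ ∫ t, |f (b + Real.sin a * p.2) - f (b + Real.sin a * t)| ∂(gaussianReal 0 1) := by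
        simpa [Real.norm_eq_abs] using
          norm_integral_le_integral_norm (μ := gaussianReal 0 1)
            (fun t => f (b + Real.sin a * p.2) - f (b + Real.sin a * t))
      have step2 : (∫ t, |f (b + Real.sin a * p.2) - f (b + Real.sin a * t)| ∂(gaussianReal 0 1))
          ≤ ∫ t, Real.sin a * ((K + |p.2| + |t|) * (|p.2| + |t|)) ∂(gaussianReal 0 1) := by
        refine integral_mono_of_nonneg (ae_of_all _ fun t => abs_nonneg _) hDi
          (ae_of_all _ fun t => ?_)
        have h1 := lip hα hα1 hf hf' (b + Real.sin a * p.2) (b + Real.sin a * t)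
        have h2 := hbound p.2
        have h3 := hbound t
        have h4 : |(b + Real.sin a * p.2) - (b + Real.sin a * t)| = Real.sin a * |p.2 - t| := by
          rw [show (b + Real.sin a * p.2) - (b + Real.sin a * t)
              = Real.sin a * (p.2 - t) by ring, abs_mul, abs_of_nonneg hs0]
      
        have h5 : |p.2 - t| ≤ |p.2| + |t| := by
          have := abs_add_le p.2 (-t)
          simpa [sub_eq_add_neg] using this
        have h6 : 0 ≤ K + |p.2| + |t| := by have := abs_nonneg t; linarith
        calc |f (b + Real.sin a * p.2) - f (b + Real.sin a * t)|
            ≤ (C + 1 + |b + Real.sin a * p.2| + |b + Real.sin a * t|) *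
              |(b + Real.sin a * p.2) - (b + Real.sin a * t)| := h1
          _ ≤ (K + |p.2| + |t|) * (Real.sin a * (|p.2| + |t|)) := by
              rw [h4]
              refine mul_le_mul (by simp only [hKdef]; linarith)
                (mul_le_mul_of_nonneg_left h5 hs0)
                (mul_nonneg hs0 (abs_nonneg _)) h6
          _ = Real.sin a * ((K + |p.2| + |t|) * (|p.2| + |t|)) := by ring
      have step3 : (∫ t, Real.sin a * ((K + |p.2| + |t|) * (|p.2| + |t|)) ∂(gaussianReal 0 1))
          = Real.sin a * Q |p.2| := by
        rw [integral_const_mul]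
        congr 1
        have hrw : (fun t : ℝ => (K + |p.2| + |t|) * (|p.2| + |t|))
            = fun t => ((K + |p.2|) * |p.2|) + ((K + 2 * |p.2|) * |t| + |t| ^ 2) := by
          funext t; ring
        have hint1 : Integrable (fun t : ℝ => (K + 2 * |p.2|) * |t|) (gaussianReal 0 1) :=
          habs_int.const_mul _
        have hint2 : Integrable (fun t : ℝ => (K + 2 * |p.2|) * |t| + |t| ^ 2)
            (gaussianReal 0 1) := hint1.add habs_sq_int
        rw [hrw, integral_add (integrable_const _) hint2,
          integral_const, integral_add hint1 habs_sq_int, integral_const_mul]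
        have hm2' : (∫ t : ℝ, |t| ^ 2 ∂(gaussianReal 0 1)) = m2 := by
          rw [hm2def]
          congr 1
          funext t
          exact sq_abs t
        simp only [probReal_univ, measure_univ, ENNReal.toReal_one, smul_eq_mul, one_mul, hm2', hQdef]
        rw [← hm1def]
        ring
      exact le_trans step1 (le_trans step2 (le_of_eq step3))
    have hQnn := hQ0 |p.2| (abs_nonneg p.2)
    have hX := sq_abs (f (b + Real.sin a * p.2) -
        ∫ ζ, f (b + Real.sin a * ζ) ∂(gaussianReal 0 1))
    nlinarith [habs2, abs_nonneg (f (b + Real.sin a * p.2) -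
        ∫ ζ, f (b + Real.sin a * ζ) ∂(gaussianReal 0 1)), mul_nonneg hs0 hQnn]
  have hmap : Measure.map Prod.snd ((gaussianReal 0 1).prod (gaussianReal 0 1))
      = gaussianReal 0 1 := by
    rw [Measure.map_snd_prod]
    simp
  have hGm : AEStronglyMeasurable (fun x : ℝ => Real.sin a ^ 2 * (Q |x|) ^ 2)
      (Measure.map Prod.snd ((gaussianReal 0 1).prod (gaussianReal 0 1))) :=
    (continuous_const.mul hQc).aestronglyMeasurable
  have hprodInt : Integrable (fun p : ℝ × ℝ => Real.sin a ^ 2 * (Q |p.2|) ^ 2)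
      ((gaussianReal 0 1).prod (gaussianReal 0 1)) := by
    have h1 : Integrable (fun x : ℝ => Real.sin a ^ 2 * (Q |x|) ^ 2) (gaussianReal 0 1) :=
      hC'int.const_mul _
    have h2 := (integrable_map_measure hGm measurable_snd.aemeasurable).mp (by rwa [hmap])
    exact h2
  refine le_trans (integral_mono_of_nonneg (ae_of_all _ fun p => ?_) hprodInt
    (ae_of_all _ key)) (le_of_eq ?_)
  · simp only [Pi.zero_apply]
    split_ifs
    exacts [sq_nonneg _, le_rfl]
  · calc (∫ p : ℝ × ℝ, Real.sin a ^ 2 * (Q |p.2|) ^ 2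
          ∂((gaussianReal 0 1).prod (gaussianReal 0 1)))
        = ∫ x : ℝ, Real.sin a ^ 2 * (Q |x|) ^ 2 ∂(gaussianReal 0 1) := by
          have h3 := integral_map (φ := Prod.snd) measurable_snd.aemeasurable hGm
          rw [← h3, hmap]
      _ = (∫ x, (Q |x|) ^ 2 ∂(gaussianReal 0 1)) * Real.sin a ^ 2 := by
          rw [integral_const_mul]; ring
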